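/- Let ν be a measure on (0,∞) with ∫₀^∞ (x ∧ 1) ν(dx) < ∞, let b ≥ 0, and define φ(u) = b u + ∫₀^∞ (1 - e^{-u x}) ν(dx). Define σ₀ = sup{α ≥ 0 : lim_{u→0+} φ(u)/u^α = 0}. Then σ₀ = sup{α ≥ 0 : limsup_{u→0+} φ(u)/u^α < ∞} = sup{ρ ∈ [0,1] : ∫_{(1,∞)} x^ρ ν(dx) < ∞}. -/

import Mathlib

open MeasureTheory Set Real Filter

variable {ν : Measure ℝ}

lemma aux_fin (hν : ∫⁻ x in Set.Ioi (0:ℝ), ENNReal.ofReal (min x 1) ∂ν < ⊤)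
    {t : ℝ} (ht : 0 < t) : ν (Set.Ioi t) < ⊤ := by
  have h1 : ENNReal.ofReal (min t 1) * ν (Set.Ioi t)
      ≤ ∫⁻ x in Set.Ioi t, ENNReal.ofReal (min x 1) ∂ν := by
    rw [← setLIntegral_const]
    exact setLIntegral_mono ((measurable_id.min measurable_const).ennreal_ofReal)
      (fun x hx => ENNReal.ofReal_le_ofReal (min_le_min (le_of_lt hx) le_rfl))
  have h2 : ∫⁻ x in Set.Ioi t, ENNReal.ofReal (min x 1) ∂ν
      ≤ ∫⁻ x in Set.Ioi (0:ℝ), ENNReal.ofReal (min x 1) ∂ν :=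
    lintegral_mono_set (Set.Ioi_subset_Ioi ht.le)
  have hpos : ENNReal.ofReal (min t 1) ≠ 0 := by
    simp [ENNReal.ofReal_eq_zero, not_le, lt_min_iff, ht]
  by_contra h
  push_neg at h
  rw [top_le_iff] at h
  rw [h, ENNReal.mul_top hpos] at h1
  exact absurd (h1.trans h2) (by simpa using hν.ne)

lemma aux_min_int (hν : ∫⁻ x in Set.Ioi (0:ℝ), ENNReal.ofReal (min x 1) ∂ν < ⊤) :
    IntegrableOn (fun x => min x 1) (Set.Ioi (0:ℝ)) ν := by
  constructor
  · exact ((continuous_id.min continuous_const)).aestronglyMeasurable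
  · rw [hasFiniteIntegral_iff_ofReal]
    · exact hν
    · filter_upwards [ae_restrict_mem measurableSet_Ioi] with x hx
      simp only [le_min_iff]
      exact ⟨le_of_lt hx, zero_le_one⟩

lemma one_sub_exp_le (s : ℝ) : 1 - Real.exp (-s) ≤ s := by
  have := Real.add_one_le_exp (-s); linarith

lemma f_cont (u : ℝ) : Continuous (fun x : ℝ => 1 - Real.exp (-u * x)) := by
  continuity

lemma f_nonneg {u x : ℝ} (hu : 0 < u) (hx : 0 < x) : 0 ≤ 1 - Real.exp (-u * x) := by
  have : Real.exp (-u * x) ≤ 1 := by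
    rw [Real.exp_le_one_iff]; nlinarith
  linarith

lemma f_le_one {u x : ℝ} : 1 - Real.exp (-u * x) ≤ 1 := by
  have := Real.exp_pos (-u * x); linarith

lemma f_le_ux {u x : ℝ} : 1 - Real.exp (-u * x) ≤ u * x := by
  have := one_sub_exp_le (u * x); rwa [← neg_mul] at this

lemma aux_f_int (hν : ∫⁻ x in Set.Ioi (0:ℝ), ENNReal.ofReal (min x 1) ∂ν < ⊤)
    {u : ℝ} (hu : 0 < u) :
    IntegrableOn (fun x => 1 - Real.exp (-u * x)) (Set.Ioi (0:ℝ)) ν := by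
  refine Integrable.mono ((aux_min_int hν).const_mul (max u 1))
    (f_cont u).aestronglyMeasurable ?_
  filter_upwards [ae_restrict_mem measurableSet_Ioi] with x hx
  have h0 : (0:ℝ) < x := hx
  rw [Real.norm_eq_abs, Real.norm_eq_abs, abs_of_nonneg (f_nonneg hu h0),
    abs_of_nonneg (by positivity : (0:ℝ) ≤ max u 1 * min x 1)]
  rcases le_total x 1 with h | h
  · rw [min_eq_left h]
    calc 1 - Real.exp (-u * x) ≤ u * x := f_le_ux
    _ ≤ max u 1 * x := by nlinarith [le_max_left u 1]
  · rw [min_eq_right h]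
    calc 1 - Real.exp (-u * x) ≤ 1 := f_le_one
    _ ≤ max u 1 * 1 := by nlinarith [le_max_right u 1]

lemma psi_nonneg {u : ℝ} (hu : 0 < u) :
    0 ≤ ∫ x in Set.Ioi (0:ℝ), (1 - Real.exp (-u * x)) ∂ν :=
  setIntegral_nonneg measurableSet_Ioi (fun _ hx => f_nonneg hu hx)

lemma psi_eq_lintegral {u : ℝ} (hu : 0 < u) :
    ∫ x in Set.Ioi (0:ℝ), (1 - Real.exp (-u * x)) ∂ν
      = (∫⁻ x in Set.Ioi (0:ℝ), ENNReal.ofReal (1 - Real.exp (-u * x)) ∂ν).toReal := by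
  refine integral_eq_lintegral_of_nonneg_ae ?_ (f_cont u).aestronglyMeasurable
  filter_upwards [ae_restrict_mem measurableSet_Ioi] with x hx
  exact f_nonneg hu hx

lemma psi_tail_lower (hν : ∫⁻ x in Set.Ioi (0:ℝ), ENNReal.ofReal (min x 1) ∂ν < ⊤)
    {u : ℝ} (hu : 0 < u) :
    (1 - Real.exp (-1)) * (ν (Set.Ioi u⁻¹)).toReal
      ≤ ∫ x in Set.Ioi (0:ℝ), (1 - Real.exp (-u * x)) ∂ν := by
  have hinv : (0:ℝ) < u⁻¹ := by positivity
  have hfin := aux_fin hν hinv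
  have h1 : ∫ x in Set.Ioi u⁻¹, (1 - Real.exp (-(1:ℝ))) ∂ν
      ≤ ∫ x in Set.Ioi u⁻¹, (1 - Real.exp (-u * x)) ∂ν := by
    refine setIntegral_mono_on (integrableOn_const hfin.ne)
      ((aux_f_int hν hu).mono_set (Set.Ioi_subset_Ioi hinv.le)) measurableSet_Ioi ?_
    intro x hx
    have : (1:ℝ) ≤ u * x := by
      rw [← mul_inv_cancel₀ hu.ne']
      exact mul_le_mul_of_nonneg_left (le_of_lt hx) hu.le
    have : Real.exp (-u * x) ≤ Real.exp (-1) := by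
      apply Real.exp_le_exp.2; linarith
    linarith
  have h2 : ∫ x in Set.Ioi u⁻¹, (1 - Real.exp (-u * x)) ∂ν
      ≤ ∫ x in Set.Ioi (0:ℝ), (1 - Real.exp (-u * x)) ∂ν := by
    refine setIntegral_mono_set (aux_f_int hν hu) ?_ (HasSubset.Subset.eventuallyLE (Set.Ioi_subset_Ioi hinv.le))
    filter_upwards [ae_restrict_mem measurableSet_Ioi] with x hx
    exact f_nonneg hu hx
  rw [setIntegral_const, smul_eq_mul, mul_comm] at h1
  exact le_trans h1 h2

lemma min_le_rpow {t ρ : ℝ} (ht : 0 < t) (hρ0 : 0 ≤ ρ) (hρ1 : ρ ≤ 1) :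
    min t 1 ≤ t ^ ρ := by
  rcases le_total t 1 with h | h
  · rw [min_eq_left h]
    calc t = t ^ (1:ℝ) := (Real.rpow_one t).symm
    _ ≤ t ^ ρ := Real.rpow_le_rpow_of_exponent_ge ht h hρ1
  · rw [min_eq_right h]
    exact Real.one_le_rpow h hρ0

lemma psi_upper (hν : ∫⁻ x in Set.Ioi (0:ℝ), ENNReal.ofReal (min x 1) ∂ν < ⊤)
    {ρ : ℝ} (hρ0 : 0 ≤ ρ) (hρ1 : ρ ≤ 1)
    (hC : ∫⁻ x in Set.Ioi (1:ℝ), ENNReal.ofReal (x ^ ρ) ∂ν < ⊤) :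
    ∃ K : ℝ, 0 ≤ K ∧ ∀ u ∈ Set.Ioo (0:ℝ) 1,
      ∫ x in Set.Ioi (0:ℝ), (1 - Real.exp (-u * x)) ∂ν ≤ K * u ^ ρ := by
  set L₁ : ENNReal := ∫⁻ x in Set.Ioc (0:ℝ) 1, ENNReal.ofReal x ∂ν with hL₁
  set K₂ : ENNReal := ∫⁻ x in Set.Ioi (1:ℝ), ENNReal.ofReal (x ^ ρ) ∂ν with hK₂
  have hL₁fin : L₁ < ⊤ := by
    have : L₁ = ∫⁻ x in Set.Ioc (0:ℝ) 1, ENNReal.ofReal (min x 1) ∂ν := by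
      refine setLIntegral_congr_fun measurableSet_Ioc ?_
      intro x hx
      dsimp only
      rw [min_eq_left hx.2]
    rw [this]
    exact lt_of_le_of_lt (lintegral_mono_set Set.Ioc_subset_Ioi_self) hν
  refine ⟨L₁.toReal + K₂.toReal, by positivity, ?_⟩
  intro u hu
  obtain ⟨hu0, hu1⟩ := hu
  -- bound the lintegral
  have hsplit : Set.Ioi (0:ℝ) = Set.Ioc 0 1 ∪ Set.Ioi 1 := (Set.Ioc_union_Ioi_eq_Ioi zero_le_one).symm
  have hdisj : Disjoint (Set.Ioc (0:ℝ) 1) (Set.Ioi 1) := by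
    rw [Set.disjoint_left]; intro x hx hx'; exact absurd hx.2 (not_le.2 hx')
  have hmeas : Measurable fun x : ℝ => ENNReal.ofReal (1 - Real.exp (-u * x)) :=
    (f_cont u).measurable.ennreal_ofReal
  have hstep : ∫⁻ x in Set.Ioi (0:ℝ), ENNReal.ofReal (1 - Real.exp (-u * x)) ∂ν
      ≤ ENNReal.ofReal u * L₁ + ENNReal.ofReal (u ^ ρ) * K₂ := by
    rw [hsplit, lintegral_union measurableSet_Ioi hdisj]
    gcongr
    · calc ∫⁻ x in Set.Ioc (0:ℝ) 1, ENNReal.ofReal (1 - Real.exp (-u * x)) ∂ν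
          ≤ ∫⁻ x in Set.Ioc (0:ℝ) 1, ENNReal.ofReal u * ENNReal.ofReal x ∂ν := by
            refine setLIntegral_mono (measurable_const.mul measurable_id.ennreal_ofReal) ?_
            intro x hx
            rw [← ENNReal.ofReal_mul hu0.le]
            exact ENNReal.ofReal_le_ofReal f_le_ux
      _ = ENNReal.ofReal u * L₁ := lintegral_const_mul' _ _ ENNReal.ofReal_ne_top
    · calc ∫⁻ x in Set.Ioi (1:ℝ), ENNReal.ofReal (1 - Real.exp (-u * x)) ∂ν
          ≤ ∫⁻ x in Set.Ioi (1:ℝ), ENNReal.ofReal (u ^ ρ) * ENNReal.ofReal (x ^ ρ) ∂ν := by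
            refine setLIntegral_mono (measurable_const.mul ((measurable_id.pow_const _).ennreal_ofReal)) ?_
            intro x hx
            have hx0 : (0:ℝ) < x := lt_trans zero_lt_one hx
            rw [← ENNReal.ofReal_mul (Real.rpow_nonneg hu0.le _), ← Real.mul_rpow hu0.le hx0.le]
            refine ENNReal.ofReal_le_ofReal (le_trans (le_min f_le_ux f_le_one) (min_le_rpow (by positivity) hρ0 hρ1))
      _ = ENNReal.ofReal (u ^ ρ) * K₂ := lintegral_const_mul' _ _ ENNReal.ofReal_ne_top
  have hRne : ENNReal.ofReal u * L₁ + ENNReal.ofReal (u ^ ρ) * K₂ ≠ ⊤ :=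
    (ENNReal.add_lt_top.2 ⟨ENNReal.mul_lt_top ENNReal.ofReal_lt_top hL₁fin,
      ENNReal.mul_lt_top ENNReal.ofReal_lt_top hC⟩).ne
  rw [psi_eq_lintegral hu0]
  calc (∫⁻ x in Set.Ioi (0:ℝ), ENNReal.ofReal (1 - Real.exp (-u * x)) ∂ν).toReal
      ≤ (ENNReal.ofReal u * L₁ + ENNReal.ofReal (u ^ ρ) * K₂).toReal :=
        ENNReal.toReal_mono hRne hstep
    _ = u * L₁.toReal + u ^ ρ * K₂.toReal := by
        rw [ENNReal.toReal_add (ENNReal.mul_lt_top ENNReal.ofReal_lt_top hL₁fin).ne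
          (ENNReal.mul_lt_top ENNReal.ofReal_lt_top hC).ne, ENNReal.toReal_mul, ENNReal.toReal_mul,
          ENNReal.toReal_ofReal hu0.le, ENNReal.toReal_ofReal (Real.rpow_nonneg hu0.le _)]
    _ ≤ (L₁.toReal + K₂.toReal) * u ^ ρ := by
        have hle : u ≤ u ^ ρ := by
          calc u = u ^ (1:ℝ) := (Real.rpow_one u).symm
          _ ≤ u ^ ρ := Real.rpow_le_rpow_of_exponent_ge hu0 hu1.le hρ1
        have h1 : (0:ℝ) ≤ L₁.toReal := ENNReal.toReal_nonneg
        have h2 : (0:ℝ) ≤ K₂.toReal := ENNReal.toReal_nonneg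
        nlinarith [Real.rpow_nonneg hu0.le ρ]

lemma psi_tendsto_zero (hν : ∫⁻ x in Set.Ioi (0:ℝ), ENNReal.ofReal (min x 1) ∂ν < ⊤) :
    Tendsto (fun u => ∫ x in Set.Ioi (0:ℝ), (1 - Real.exp (-u * x)) ∂ν)
      (nhdsWithin 0 (Set.Ioi 0)) (nhds 0) := by
  have h := tendsto_integral_filter_of_dominated_convergence (μ := ν.restrict (Set.Ioi 0))
    (l := nhdsWithin (0:ℝ) (Set.Ioi 0))
    (F := fun u x => 1 - Real.exp (-u * x)) (f := fun _ => (0:ℝ))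
    (bound := fun x => min x 1)
    (Filter.Eventually.of_forall (fun u => (f_cont u).aestronglyMeasurable))
    ?_ (aux_min_int hν) ?_
  · simpa using h
  · filter_upwards [Ioc_mem_nhdsGT_of_mem ⟨le_rfl, zero_lt_one⟩] with u hu
    filter_upwards [ae_restrict_mem measurableSet_Ioi] with x hx
    rw [Real.norm_eq_abs, abs_of_nonneg (f_nonneg hu.1 hx)]
    rcases le_total x 1 with h | h
    · rw [min_eq_left h]
      calc 1 - Real.exp (-u * x) ≤ u * x := f_le_ux
      _ ≤ 1 * x := mul_le_mul_of_nonneg_right hu.2 hx.le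
      _ = x := one_mul x
    · rw [min_eq_right h]; exact f_le_one
  · filter_upwards [ae_restrict_mem measurableSet_Ioi] with x _
    have hc : Continuous fun u : ℝ => 1 - Real.exp (-u * x) := by continuity
    have := (hc.tendsto 0).mono_left (nhdsWithin_le_nhds (s := Set.Ioi 0))
    simpa using this

lemma half_le_one_sub_exp {t : ℝ} (h0 : 0 ≤ t) (h1 : t ≤ 1) : t / 2 ≤ 1 - Real.exp (-t) := by
  rw [Real.exp_neg]
  have h := Real.add_one_le_exp t
  have hy : (0:ℝ) < 1 + t := by linarith
  have hi : (Real.exp t)⁻¹ ≤ (1 + t)⁻¹ := by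
    apply inv_anti₀ hy; linarith
  have hm : (1 + t)⁻¹ * (1 + t) = 1 := inv_mul_cancel₀ hy.ne'
  nlinarith [inv_nonneg.2 hy.le]

lemma phi_lower (hν : ∫⁻ x in Set.Ioi (0:ℝ), ENNReal.ofReal (min x 1) ∂ν < ⊤)
    {b : ℝ} (hb : 0 ≤ b) (hnontriv : 0 < b ∨ ν (Set.Ioi (0:ℝ)) ≠ 0) :
    ∃ c > (0:ℝ), ∃ δ > (0:ℝ), ∀ u ∈ Set.Ioo 0 δ,
      c * u ≤ b * u + ∫ x in Set.Ioi (0:ℝ), (1 - Real.exp (-u * x)) ∂ν := by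
  rcases hnontriv with hb' | hν'
  · exact ⟨b, hb', 1, zero_lt_one, fun u hu => le_add_of_le_of_nonneg le_rfl (psi_nonneg hu.1)⟩
  · -- find ε > 0 with ν (Ioi ε) ≠ 0
    have hcover : Set.Ioi (0:ℝ) = ⋃ n : ℕ, Set.Ioi ((n:ℝ) + 1)⁻¹ := by
      ext x
      simp only [Set.mem_Ioi, Set.mem_iUnion]
      constructor
      · intro hx
        obtain ⟨n, hn⟩ := exists_nat_gt x⁻¹
        exact ⟨n, by rw [← inv_inv x]; exact inv_strictAnti₀ (by positivity) (by linarith)⟩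
      · rintro ⟨n, hn⟩
        exact lt_trans (by positivity) hn
    have : ∃ n : ℕ, ν (Set.Ioi ((n:ℝ) + 1)⁻¹) ≠ 0 := by
      by_contra h
      push_neg at h
      apply hν'
      rw [hcover]
      refine le_antisymm (le_trans (measure_iUnion_le _) ?_) zero_le
      simp [h]
    obtain ⟨n, hn⟩ := this
    set ε : ℝ := ((n:ℝ) + 1)⁻¹ with hε
    have hε0 : (0:ℝ) < ε := by positivity
    have hfin := aux_fin hν hε0
    set m : ℝ := (ν (Set.Ioi ε)).toReal with hm
    have hm0 : 0 < m := ENNReal.toReal_pos hn hfin.ne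
    refine ⟨ε * m / 2, by positivity, ε⁻¹, by positivity, ?_⟩
    intro u hu
    obtain ⟨hu0, hu1⟩ := hu
    have huε : u * ε ≤ 1 := by
      rw [← inv_inv ε]
      rw [mul_inv_le_iff₀ (by positivity)]
      · nlinarith [hu1]
    have h1 : ∫ x in Set.Ioi ε, (1 - Real.exp (-(u * ε))) ∂ν
        ≤ ∫ x in Set.Ioi ε, (1 - Real.exp (-u * x)) ∂ν := by
      refine setIntegral_mono_on (integrableOn_const hfin.ne)
        ((aux_f_int hν hu0).mono_set (Set.Ioi_subset_Ioi hε0.le)) measurableSet_Ioi ?_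
      intro x hx
      have : Real.exp (-u * x) ≤ Real.exp (-(u * ε)) := by
        apply Real.exp_le_exp.2; nlinarith [le_of_lt (Set.mem_Ioi.1 hx)]
      linarith
    have h2 : ∫ x in Set.Ioi ε, (1 - Real.exp (-u * x)) ∂ν
        ≤ ∫ x in Set.Ioi (0:ℝ), (1 - Real.exp (-u * x)) ∂ν := by
      refine setIntegral_mono_set (aux_f_int hν hu0) ?_
        (HasSubset.Subset.eventuallyLE (Set.Ioi_subset_Ioi hε0.le))
      filter_upwards [ae_restrict_mem measurableSet_Ioi] with x hx
      exact f_nonneg hu0 hx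
    rw [setIntegral_const, smul_eq_mul] at h1
    have h3 : m * (u * ε / 2) ≤ m * (1 - Real.exp (-(u * ε))) :=
      mul_le_mul_of_nonneg_left (half_le_one_sub_exp (by positivity) huε) hm0.le
    have hbu : 0 ≤ b * u := by positivity
    calc ε * m / 2 * u = m * (u * ε / 2) := by ring
    _ ≤ m * (1 - Real.exp (-(u * ε))) := h3
    _ ≤ ∫ x in Set.Ioi (0:ℝ), (1 - Real.exp (-u * x)) ∂ν := le_trans h1 h2
    _ ≤ b * u + _ := le_add_of_nonneg_left hbu

lemma dyadic_cover {T x : ℝ} (hT : 0 < T) (hx : T < x) :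
    ∃ k : ℕ, T * 2 ^ k < x ∧ x ≤ 2 * (T * 2 ^ k) := by
  have hex : ∃ n : ℕ, x ≤ T * 2 ^ n := by
    obtain ⟨n, hn⟩ := pow_unbounded_of_one_lt (x / T) (by norm_num : (1:ℝ) < 2)
    exact ⟨n, by rw [div_lt_iff₀ hT] at hn; nlinarith⟩
  classical
  set n₀ := Nat.find hex with hn₀
  have hP : x ≤ T * 2 ^ n₀ := Nat.find_spec hex
  have hn₀pos : n₀ ≠ 0 := by
    intro h
    rw [h] at hP
    simp at hP
    linarith
  obtain ⟨k, hk⟩ := Nat.exists_eq_succ_of_ne_zero hn₀pos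
  refine ⟨k, ?_, ?_⟩
  · exact not_le.mp (Nat.find_min hex (by omega : k < n₀))
  · calc x ≤ T * 2 ^ n₀ := hP
    _ = 2 * (T * 2 ^ k) := by rw [hk, pow_succ]; ring

lemma dyadic_algebra {T ρ α C : ℝ} (hT : 0 < T) (hρ0 : 0 ≤ ρ) (k : ℕ) :
    (2 * (T * 2 ^ k)) ^ ρ * (C * (T * 2 ^ k) ^ (-α))
      ≤ (2 ^ ρ * max C 0 * T ^ (ρ - α)) * ((2:ℝ) ^ (ρ - α)) ^ k := by
  have e1 : ((2:ℝ) ^ (k:ℕ)) ^ (ρ - α) = ((2:ℝ) ^ (ρ - α)) ^ (k:ℕ) := by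
    rw [← Real.rpow_natCast (2:ℝ) k, ← Real.rpow_natCast ((2:ℝ) ^ (ρ - α)) k,
      ← Real.rpow_mul (by norm_num : (0:ℝ) ≤ 2), ← Real.rpow_mul (by norm_num : (0:ℝ) ≤ 2),
      mul_comm]
  set A : ℝ := T * 2 ^ k with hA'
  have hA : (0:ℝ) < A := by positivity
  have key : (2 * A) ^ ρ * A ^ (-α) = 2 ^ ρ * T ^ (ρ - α) * ((2:ℝ) ^ (ρ - α)) ^ k := by
    calc (2 * A) ^ ρ * A ^ (-α) = (2 ^ ρ * A ^ ρ) * A ^ (-α) := by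
          rw [Real.mul_rpow (by norm_num : (0:ℝ) ≤ 2) hA.le]
    _ = 2 ^ ρ * A ^ (ρ + -α) := by rw [Real.rpow_add hA]; ring
    _ = 2 ^ ρ * (T ^ (ρ - α) * ((2:ℝ) ^ (k:ℕ)) ^ (ρ - α)) := by
          rw [show ρ + -α = ρ - α by ring, hA', Real.mul_rpow hT.le (by positivity)]
    _ = 2 ^ ρ * T ^ (ρ - α) * ((2:ℝ) ^ (ρ - α)) ^ k := by rw [e1]; ring
  calc (2 * A) ^ ρ * (C * A ^ (-α)) = ((2 * A) ^ ρ * A ^ (-α)) * C := by ring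
  _ = (2 ^ ρ * T ^ (ρ - α) * ((2:ℝ) ^ (ρ - α)) ^ k) * C := by rw [key]
  _ ≤ (2 ^ ρ * T ^ (ρ - α) * ((2:ℝ) ^ (ρ - α)) ^ k) * max C 0 := by
        refine mul_le_mul_of_nonneg_left (le_max_left _ _) ?_
        have : (0:ℝ) ≤ ((2:ℝ) ^ (ρ - α)) := Real.rpow_nonneg (by norm_num) _
        positivity
  _ = (2 ^ ρ * max C 0 * T ^ (ρ - α)) * ((2:ℝ) ^ (ρ - α)) ^ k := by ring

lemma tail_from_bound (hν : ∫⁻ x in Set.Ioi (0:ℝ), ENNReal.ofReal (min x 1) ∂ν < ⊤)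
    {α C T : ℝ} (hT : 1 < T) (hα : 0 < α)
    (htail : ∀ t : ℝ, T ≤ t → (ν (Set.Ioi t)).toReal ≤ C * t ^ (-α))
    {ρ : ℝ} (hρ0 : 0 ≤ ρ) (hρα : ρ < α) :
    ∫⁻ x in Set.Ioi (1:ℝ), ENNReal.ofReal (x ^ ρ) ∂ν < ⊤ := by
  have hT0 : (0:ℝ) < T := lt_trans zero_lt_one hT
  set r : ℝ := (2:ℝ) ^ (ρ - α) with hr
  have hr0 : 0 ≤ r := Real.rpow_nonneg (by norm_num) _
  have hr1 : r < 1 := Real.rpow_lt_one_of_one_lt_of_neg (by norm_num) (by linarith)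
  set C' : ℝ := max C 0 with hC'
  set D : ℝ := 2 ^ ρ * C' * T ^ (ρ - α) with hD
  have hD0 : 0 ≤ D := by
    apply mul_nonneg (mul_nonneg (Real.rpow_nonneg (by norm_num) _) (le_max_right C 0))
    exact Real.rpow_nonneg hT0.le _
  -- split Ioi 1
  have hsplit : Set.Ioi (1:ℝ) = Set.Ioc 1 T ∪ Set.Ioi T := (Set.Ioc_union_Ioi_eq_Ioi hT.le).symm
  rw [hsplit, lintegral_union measurableSet_Ioi
    (by rw [Set.disjoint_left]; intro x hx hx'; exact absurd hx.2 (not_le.2 hx'))]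
  have hfin1 : ∫⁻ x in Set.Ioc (1:ℝ) T, ENNReal.ofReal (x ^ ρ) ∂ν < ⊤ := by
    calc ∫⁻ x in Set.Ioc (1:ℝ) T, ENNReal.ofReal (x ^ ρ) ∂ν
        ≤ ∫⁻ _ in Set.Ioc (1:ℝ) T, ENNReal.ofReal (T ^ ρ) ∂ν := by
          refine setLIntegral_mono measurable_const ?_
          intro x hx
          exact ENNReal.ofReal_le_ofReal
            (Real.rpow_le_rpow (le_trans zero_le_one hx.1.le) hx.2 hρ0)
      _ = ENNReal.ofReal (T ^ ρ) * ν (Set.Ioc 1 T) := setLIntegral_const _ _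
      _ ≤ ENNReal.ofReal (T ^ ρ) * ν (Set.Ioi 1) := by
          gcongr
          exact Set.Ioc_subset_Ioi_self
      _ < ⊤ := ENNReal.mul_lt_top ENNReal.ofReal_lt_top (aux_fin hν zero_lt_one)
  have hfin2 : ∫⁻ x in Set.Ioi T, ENNReal.ofReal (x ^ ρ) ∂ν < ⊤ := by
    have hsub : Set.Ioi T ⊆ ⋃ k : ℕ, Set.Ioc (T * 2 ^ k) (2 * (T * 2 ^ k)) := by
      intro x hx
      obtain ⟨k, h1, h2⟩ := dyadic_cover hT0 hx
      exact Set.mem_iUnion.2 ⟨k, h1, h2⟩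
    calc ∫⁻ x in Set.Ioi T, ENNReal.ofReal (x ^ ρ) ∂ν
        ≤ ∫⁻ x in ⋃ k : ℕ, Set.Ioc (T * 2 ^ k) (2 * (T * 2 ^ k)), ENNReal.ofReal (x ^ ρ) ∂ν :=
          lintegral_mono_set hsub
      _ ≤ ∑' k : ℕ, ∫⁻ x in Set.Ioc (T * 2 ^ k) (2 * (T * 2 ^ k)), ENNReal.ofReal (x ^ ρ) ∂ν :=
          lintegral_iUnion_le _ _
      _ ≤ ∑' k : ℕ, ENNReal.ofReal D * ENNReal.ofReal r ^ k := by
          refine ENNReal.tsum_le_tsum fun k => ?_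
          set a : ℝ := T * 2 ^ k with ha
          have ha0 : 0 < a := by positivity
          have haT : T ≤ a := by
            have h1 : (1:ℝ) ≤ 2 ^ k := one_le_pow₀ (by norm_num)
            nlinarith
          calc ∫⁻ x in Set.Ioc a (2 * a), ENNReal.ofReal (x ^ ρ) ∂ν
              ≤ ∫⁻ _ in Set.Ioc a (2 * a), ENNReal.ofReal ((2 * a) ^ ρ) ∂ν := by
                refine setLIntegral_mono measurable_const ?_
                intro x hx
                exact ENNReal.ofReal_le_ofReal (Real.rpow_le_rpow (ha0.le.trans hx.1.le) hx.2 hρ0)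
            _ = ENNReal.ofReal ((2 * a) ^ ρ) * ν (Set.Ioc a (2 * a)) := setLIntegral_const _ _
            _ ≤ ENNReal.ofReal ((2 * a) ^ ρ) * ν (Set.Ioi a) := by gcongr; exact Set.Ioc_subset_Ioi_self
            _ ≤ ENNReal.ofReal ((2 * a) ^ ρ) * ENNReal.ofReal (C * a ^ (-α)) := by
                gcongr
                exact (ENNReal.le_ofReal_iff_toReal_le (aux_fin hν ha0).ne
                  (le_trans ENNReal.toReal_nonneg (htail a haT))).2 (htail a haT)
            _ = ENNReal.ofReal ((2 * a) ^ ρ * (C * a ^ (-α))) :=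
                (ENNReal.ofReal_mul (Real.rpow_nonneg (by positivity) _)).symm
            _ ≤ ENNReal.ofReal (D * r ^ k) :=
                ENNReal.ofReal_le_ofReal (dyadic_algebra hT0 hρ0 k)
            _ = ENNReal.ofReal D * ENNReal.ofReal r ^ k := by
                rw [ENNReal.ofReal_mul hD0, ENNReal.ofReal_pow hr0]
      _ = ENNReal.ofReal D * ∑' k : ℕ, ENNReal.ofReal r ^ k := ENNReal.tsum_mul_left
      _ < ⊤ := by
          rw [ENNReal.tsum_geometric]
          refine ENNReal.mul_lt_top ENNReal.ofReal_lt_top ?_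
          rw [ENNReal.inv_lt_top]
          exact tsub_pos_of_lt (ENNReal.ofReal_lt_one.2 hr1)
  exact ENNReal.add_lt_top.2 ⟨hfin1, hfin2⟩

lemma rpow_tendsto_zero {p : ℝ} (hp : 0 < p) :
    Tendsto (fun u : ℝ => u ^ p) (nhdsWithin 0 (Set.Ioi 0)) (nhds 0) := by
  have h := (Real.continuousAt_rpow_const 0 p (Or.inr hp.le)).tendsto.mono_left
    (nhdsWithin_le_nhds (s := Set.Ioi 0))
  simpa [Real.zero_rpow hp.ne'] using h

lemma le_sSup_of_dense {s : Set ℝ} (hbdd : BddAbove s) (h0 : (0:ℝ) ∈ s) {ρ : ℝ} (hρ : 0 ≤ ρ)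
    (h : ∀ x, 0 ≤ x → x < ρ → x ∈ s) : ρ ≤ sSup s := by
  by_contra hc
  push_neg at hc
  have h0' : 0 ≤ sSup s := le_csSup hbdd h0
  have : (sSup s + ρ)/2 ≤ sSup s := le_csSup hbdd (h _ (by linarith) (by linarith))
  linarith
theorem subordinator_index_characterization (ν : Measure ℝ) (b : ℝ) (hb : 0 ≤ b)
    (hν : ∫⁻ x in Set.Ioi (0:ℝ), ENNReal.ofReal (min x 1) ∂ν < ⊤)
    (hnontriv : 0 < b ∨ ν (Set.Ioi (0:ℝ)) ≠ 0)
    (φ : ℝ → ℝ)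
    (hφ : ∀ u > 0, φ u = b * u + ∫ x in Set.Ioi (0:ℝ), (1 - Real.exp (-u * x)) ∂ν) :
    sSup {α : ℝ | 0 ≤ α ∧ Tendsto (fun u => φ u / u ^ α) (nhdsWithin 0 (Set.Ioi 0)) (nhds 0)}
      = sSup {α : ℝ | 0 ≤ α ∧
          IsBoundedUnder (· ≤ ·) (nhdsWithin 0 (Set.Ioi 0)) (fun u => φ u / u ^ α)} ∧
    sSup {α : ℝ | 0 ≤ α ∧ Tendsto (fun u => φ u / u ^ α) (nhdsWithin 0 (Set.Ioi 0)) (nhds 0)}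
      = sSup {ρ : ℝ | 0 ≤ ρ ∧ ρ ≤ 1 ∧ ∫⁻ x in Set.Ioi (1:ℝ), ENNReal.ofReal (x ^ ρ) ∂ν < ⊤} := by
  set ψ : ℝ → ℝ := fun u => ∫ x in Set.Ioi (0:ℝ), (1 - Real.exp (-u * x)) ∂ν with hψdef
  set A := {α : ℝ | 0 ≤ α ∧ Tendsto (fun u => φ u / u ^ α) (nhdsWithin 0 (Set.Ioi 0)) (nhds 0)}
    with hAdef
  set B := {α : ℝ | 0 ≤ α ∧
      IsBoundedUnder (· ≤ ·) (nhdsWithin 0 (Set.Ioi 0)) (fun u => φ u / u ^ α)} with hBdef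
  set C := {ρ : ℝ | 0 ≤ ρ ∧ ρ ≤ 1 ∧ ∫⁻ x in Set.Ioi (1:ℝ), ENNReal.ofReal (x ^ ρ) ∂ν < ⊤}
    with hCdef
  -- 0 ∈ A
  have hA0 : (0:ℝ) ∈ A := by
    refine ⟨le_rfl, ?_⟩
    have hb' : Tendsto (fun u : ℝ => b * u) (nhdsWithin 0 (Set.Ioi 0)) (nhds 0) := by
      have := ((continuous_const.mul continuous_id :
        Continuous fun u : ℝ => b * u).tendsto 0).mono_left
        (nhdsWithin_le_nhds (s := Set.Ioi 0))
      simpa [Pi.mul_def] using this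
    have h1 : Tendsto (fun u : ℝ => b * u + ψ u) (nhdsWithin 0 (Set.Ioi 0)) (nhds 0) := by
      have h := hb'.add (psi_tendsto_zero hν)
      rw [add_zero] at h
      exact h
    refine h1.congr' ?_
    filter_upwards [self_mem_nhdsWithin] with u hu
    rw [hφ u hu, Real.rpow_zero, div_one]
  -- 0 ∈ C
  have hν1 := aux_fin hν zero_lt_one
  have hC0 : (0:ℝ) ∈ C := by
    refine ⟨le_rfl, zero_le_one, ?_⟩
    have heq : ∫⁻ x in Set.Ioi (1:ℝ), ENNReal.ofReal (x ^ (0:ℝ)) ∂ν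
        = ∫⁻ _ in Set.Ioi (1:ℝ), 1 ∂ν := by
      refine setLIntegral_congr_fun measurableSet_Ioi ?_
      intro x hx
      dsimp only
      rw [Real.rpow_zero, ENNReal.ofReal_one]
    rw [heq, setLIntegral_one]
    exact hν1
  -- lower bound for φ
  obtain ⟨c, hc, δ₀, hδ₀, hlow⟩ := phi_lower hν hb hnontriv
  have hφlow : ∀ u ∈ Set.Ioo (0:ℝ) δ₀, c * u ≤ φ u := fun u hu => by
    rw [hφ u hu.1]; exact hlow u hu
  have hφnn : ∀ u : ℝ, 0 < u → 0 ≤ φ u := fun u hu => by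
    rw [hφ u hu]; exact add_nonneg (by positivity) (psi_nonneg hu)
  -- every element of B is ≤ 1
  have hBub : ∀ γ ∈ B, γ ≤ 1 := by
    intro γ hγ
    by_contra hγ1
    push_neg at hγ1
    obtain ⟨hγ0, M, hM⟩ := hγ
    have hM' : ∀ᶠ u in nhdsWithin (0:ℝ) (Set.Ioi 0), φ u / u ^ γ ≤ M :=
      Filter.eventually_map.1 hM
    have hev : ∀ᶠ u in nhdsWithin (0:ℝ) (Set.Ioi 0), c ≤ M * u ^ (γ - 1) := by
      filter_upwards [hM', Filter.eventually_of_mem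
        (Ioo_mem_nhdsGT_of_mem (Set.mem_Ico.2 ⟨le_rfl, hδ₀⟩)) (fun x h => h)] with u hu1 hu2
      have hu0 : (0:ℝ) < u := hu2.1
      have hpow : 0 < u ^ γ := Real.rpow_pos_of_pos hu0 γ
      have h2 : c * u ≤ M * u ^ γ := le_trans (hφlow u hu2) ((div_le_iff₀ hpow).1 hu1)
      have h3 : u ^ (γ - 1) = u ^ γ / u := by rw [Real.rpow_sub hu0, Real.rpow_one]
      rw [h3, mul_div_assoc', le_div_iff₀ hu0]
      linarith
    have hlim : Tendsto (fun u : ℝ => M * u ^ (γ - 1)) (nhdsWithin 0 (Set.Ioi 0)) (nhds 0) := by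
      simpa using (rpow_tendsto_zero (by linarith : (0:ℝ) < γ - 1)).const_mul M
    linarith [ge_of_tendsto hlim hev]
  -- B gives integrability (hBC)
  have hBC : ∀ γ ∈ B, ∀ ρ, 0 ≤ ρ → ρ < γ → ρ ∈ C := by
    intro γ hγ ρ hρ0 hργ
    have hγ1 := hBub γ hγ
    obtain ⟨hγ0, M, hM⟩ := hγ
    have hM' : ∀ᶠ u in nhdsWithin (0:ℝ) (Set.Ioi 0), φ u / u ^ γ ≤ M :=
      Filter.eventually_map.1 hM
    obtain ⟨δ₁, hδ₁, hsub⟩ := mem_nhdsGT_iff_exists_Ioo_subset.1 hM'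
    have hδ₁0 : (0:ℝ) < δ₁ := hδ₁
    set e : ℝ := 1 - Real.exp (-1) with he
    have he0 : 0 < e := by
      have : Real.exp (-1) < 1 := by rw [Real.exp_lt_one_iff]; norm_num
      simp only [he]; linarith
    set T : ℝ := δ₁⁻¹ + 1 with hT
    have hT1 : 1 < T := by
      have : (0:ℝ) < δ₁⁻¹ := by positivity
      simp only [hT]; linarith
    have htail : ∀ t : ℝ, T ≤ t → (ν (Set.Ioi t)).toReal ≤ (M / e) * t ^ (-γ) := by
      intro t ht
      have ht0 : (0:ℝ) < t := by
        have : (0:ℝ) < δ₁⁻¹ := by positivity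
        simp only [hT] at ht; linarith
      have hu0 : (0:ℝ) < t⁻¹ := by positivity
      have huδ : t⁻¹ < δ₁ := by
        have h1 : δ₁⁻¹ < t := by
          have : (0:ℝ) < δ₁⁻¹ := by positivity
          simp only [hT] at ht; linarith
        rw [show δ₁ = (δ₁⁻¹)⁻¹ by rw [inv_inv]]
        exact inv_strictAnti₀ (by positivity) h1
      have hbound : φ t⁻¹ ≤ M * (t⁻¹) ^ γ :=
        (div_le_iff₀ (Real.rpow_pos_of_pos hu0 γ)).1 (hsub ⟨hu0, huδ⟩)
      have h1 : e * (ν (Set.Ioi (t⁻¹)⁻¹)).toReal ≤ ψ t⁻¹ := psi_tail_lower hν hu0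
      rw [inv_inv] at h1
      have h2 : ψ t⁻¹ ≤ φ t⁻¹ := by
        rw [hφ _ hu0]
        have : 0 ≤ b * t⁻¹ := by positivity
        simp only [hψdef]; linarith
      have h3 : (t⁻¹) ^ γ = t ^ (-γ) := by
        rw [Real.inv_rpow ht0.le, ← Real.rpow_neg ht0.le]
      rw [div_mul_eq_mul_div, le_div_iff₀ he0]
      calc (ν (Set.Ioi t)).toReal * e = e * (ν (Set.Ioi t)).toReal := mul_comm _ _
      _ ≤ φ t⁻¹ := le_trans h1 h2
      _ ≤ M * (t⁻¹) ^ γ := hbound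
      _ = M * t ^ (-γ) := by rw [h3]
    exact ⟨hρ0, by linarith, tail_from_bound hν hT1 (by linarith : (0:ℝ) < γ) htail hρ0 hργ⟩
  -- C gives membership in B and A
  have hCA : ∀ ρ ∈ C, ρ ∈ B ∧ ∀ α, 0 ≤ α → α < ρ → α ∈ A := by
    intro ρ hρ
    obtain ⟨hρ0, hρ1, hρfin⟩ := hρ
    obtain ⟨K, hK0, hKb⟩ := psi_upper hν hρ0 hρ1 hρfin
    have hup : ∀ u ∈ Set.Ioo (0:ℝ) 1, φ u ≤ (b + K) * u ^ ρ := by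
      intro u hu
      have hu0 := hu.1
      have hle : u ≤ u ^ ρ := by
        calc u = u ^ (1:ℝ) := (Real.rpow_one u).symm
        _ ≤ u ^ ρ := Real.rpow_le_rpow_of_exponent_ge hu0 hu.2.le hρ1
      rw [hφ u hu0]
      have h := hKb u hu
      nlinarith [Real.rpow_nonneg hu0.le ρ]
    have hmemIoo : ∀ᶠ u in nhdsWithin (0:ℝ) (Set.Ioi 0), u ∈ Set.Ioo (0:ℝ) 1 :=
      Filter.eventually_of_mem (Ioo_mem_nhdsGT_of_mem (Set.mem_Ico.2 ⟨le_rfl, zero_lt_one⟩))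
        fun x h => h
    constructor
    · refine ⟨hρ0, b + K, Filter.eventually_map.2 ?_⟩
      filter_upwards [hmemIoo] with u hu
      exact (div_le_iff₀ (Real.rpow_pos_of_pos hu.1 ρ)).2 (hup u hu)
    · intro α hα0 hαρ
      refine ⟨hα0, ?_⟩
      have hev1 : ∀ᶠ u in nhdsWithin (0:ℝ) (Set.Ioi 0), 0 ≤ φ u / u ^ α := by
        filter_upwards [hmemIoo] with u hu
        exact div_nonneg (hφnn u hu.1) (Real.rpow_pos_of_pos hu.1 α).le
      have hev2 : ∀ᶠ u in nhdsWithin (0:ℝ) (Set.Ioi 0),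
          φ u / u ^ α ≤ (b + K) * u ^ (ρ - α) := by
        filter_upwards [hmemIoo] with u hu
        have hu0 := hu.1
        have hpow : 0 < u ^ α := Real.rpow_pos_of_pos hu0 α
        rw [div_le_iff₀ hpow, mul_assoc, ← Real.rpow_add hu0, show ρ - α + α = ρ by ring]
        exact hup u hu
      have hlim : Tendsto (fun u : ℝ => (b + K) * u ^ (ρ - α))
          (nhdsWithin 0 (Set.Ioi 0)) (nhds 0) := by
        simpa using (rpow_tendsto_zero (by linarith : (0:ℝ) < ρ - α)).const_mul (b + K)
      exact squeeze_zero' hev1 hev2 hlim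
  -- bookkeeping
  have hAB : A ⊆ B := fun α hα => ⟨hα.1, hα.2.isBoundedUnder_le⟩
  have hBbdd : BddAbove B := ⟨1, fun γ hγ => hBub γ hγ⟩
  have hAbdd : BddAbove A := BddAbove.mono hAB hBbdd
  have hCbdd : BddAbove C := ⟨1, fun ρ hρ => hρ.2.1⟩
  have hB0 : (0:ℝ) ∈ B := hAB hA0
  have h1 : sSup A ≤ sSup B := csSup_le_csSup hBbdd ⟨0, hA0⟩ hAB
  have h2 : sSup B ≤ sSup C := by
    refine csSup_le ⟨0, hB0⟩ fun γ hγ => ?_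
    rcases le_or_gt γ 0 with h | h
    · exact le_trans h (le_csSup hCbdd hC0)
    · exact le_sSup_of_dense hCbdd hC0 hγ.1 fun ρ h0 hlt => hBC γ hγ ρ h0 hlt
  have h3 : sSup C ≤ sSup A := by
    refine csSup_le ⟨0, hC0⟩ fun ρ hρ => ?_
    exact le_sSup_of_dense hAbdd hA0 hρ.1 fun α h0 hlt => (hCA ρ hρ).2 α h0 hlt
  exact ⟨le_antisymm h1 (le_trans h2 h3), le_antisymm (le_trans h1 h2) h3⟩
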